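/- Let F be a free filter on ℕ and let D, E ⊆ (-1,1)^ℕ be countable sets. Then there exists a homeomorphism h : Q → Q of the Hilbert cube such that h[C_F] = C_F, h[(-1,1)^ℕ] = (-1,1)^ℕ, and for all d ∈ D, e ∈ E and n ∈ ℕ, h(d)(n) ≠ e(n). -/
import Mathlib


open Filter Topology Set

/-- The Hilbert cube `Q = [-1,1]^ℕ` with the product topology. -/
abbrev Hcube : Type := {f : ℕ → ℝ // ∀ n, f n ∈ Set.Icc (-1 : ℝ) 1}

/-- `K_F`: the points of the Hilbert cube that `F`-converge to `0`. -/
def KF (F : Filter ℕ) : Set Hcube :=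
  {f | ∀ m : ℕ, {n | |f.val n| < (1 / 2) ^ m} ∈ F}

/-- The pseudointerior `(-1,1)^ℕ` of the Hilbert cube. -/
def pseudoInt : Set Hcube := {f | ∀ n, |f.val n| < 1}

/-- `C_F = K_F ∩ (-1,1)^ℕ`. -/
def CF (F : Filter ℕ) : Set Hcube := KF F ∩ pseudoInt

noncomputable section HcubeAux

instance : CompactSpace Hcube := by
  have h : IsCompact {f : ℕ → ℝ | ∀ n, f n ∈ Icc (-1:ℝ) 1} := by
    have he : {f : ℕ → ℝ | ∀ n, f n ∈ Icc (-1:ℝ) 1} = Set.pi univ (fun _ => Icc (-1:ℝ) 1) := by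
      ext f; simp only [Set.mem_setOf_eq, Set.mem_univ_pi]
    rw [he]
    exact isCompact_univ_pi fun _ => isCompact_Icc
  exact isCompact_iff_compactSpace.mp h

def psi (t x : ℝ) : ℝ := x + t * (1 - x ^ 2)

lemma psi_lt_psi {t x y : ℝ} (ht0 : 0 < t) (ht : t < 1/2)
    (hx : x ∈ Icc (-1:ℝ) 1) (hy : y ∈ Icc (-1:ℝ) 1) (hxy : x < y) :
    psi t x < psi t y := by
  obtain ⟨hx1, hx2⟩ := hx; obtain ⟨hy1, hy2⟩ := hy
  have h1 : (0:ℝ) < 1 - t * (x + y) := by nlinarith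
  have h2 := mul_pos (sub_pos.2 hxy) h1
  unfold psi; nlinarith

lemma psi_mem {t x : ℝ} (ht0 : 0 < t) (ht : t < 1/2) (hx : x ∈ Icc (-1:ℝ) 1) :
    psi t x ∈ Icc (-1:ℝ) 1 := by
  obtain ⟨hx1, hx2⟩ := hx
  have h1 := mul_nonneg (by linarith : (0:ℝ) ≤ 1 + x)
    (by nlinarith : (0:ℝ) ≤ 1 + t * (1 - x))
  have h2 := mul_nonneg (by linarith : (0:ℝ) ≤ 1 - x)
    (by nlinarith : (0:ℝ) ≤ 1 - t * (1 + x))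
  constructor <;> unfold psi <;> nlinarith

lemma abs_psi_le {t x : ℝ} (ht0 : 0 < t) (hx : x ∈ Icc (-1:ℝ) 1) :
    |psi t x| ≤ |x| + t := by
  obtain ⟨hx1, hx2⟩ := hx
  have h1 : |t * (1 - x^2)| ≤ t := by
    rw [abs_mul, abs_of_pos ht0, abs_of_nonneg (by nlinarith : (0:ℝ) ≤ 1 - x^2)]
    nlinarith
  calc |psi t x| ≤ |x| + |t * (1 - x^2)| := abs_add_le _ _
    _ ≤ |x| + t := by linarith

lemma abs_le_abs_psi {t x : ℝ} (ht0 : 0 < t) (hx : x ∈ Icc (-1:ℝ) 1) :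
    |x| ≤ |psi t x| + t := by
  obtain ⟨hx1, hx2⟩ := hx
  have h1 : |t * (1 - x^2)| ≤ t := by
    rw [abs_mul, abs_of_pos ht0, abs_of_nonneg (by nlinarith : (0:ℝ) ≤ 1 - x^2)]
    nlinarith
  have : x = psi t x - t * (1 - x^2) := by unfold psi; ring
  calc |x| = |psi t x - t * (1 - x^2)| := by rw [← this]
    _ ≤ |psi t x| + |t * (1 - x^2)| := abs_sub _ _
    _ ≤ |psi t x| + t := by linarith

lemma abs_psi_lt_one_iff {t x : ℝ} (ht0 : 0 < t) (ht : t < 1/2) (hx : x ∈ Icc (-1:ℝ) 1) :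
    |psi t x| < 1 ↔ |x| < 1 := by
  obtain ⟨hx1, hx2⟩ := hx
  constructor
  · intro h
    by_contra hc
    push_neg at hc
    have : x = 1 ∨ x = -1 := by
      rcases abs_le.mp (abs_le.mpr ⟨hx1, hx2⟩) with ⟨_, _⟩
      rcases le_or_gt 0 x with h0 | h0
      · left; rw [abs_of_nonneg h0] at hc; linarith
      · right; rw [abs_of_neg h0] at hc; linarith
    rcases this with rfl | rfl <;> (unfold psi at h; norm_num at h)
  · intro h
    rw [abs_lt] at h ⊢
    have h1 := mul_pos (by linarith [h.1] : (0:ℝ) < 1 + x)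
      (by nlinarith [h.2] : (0:ℝ) < 1 + t * (1 - x))
    have h2 := mul_pos (by linarith [h.2] : (0:ℝ) < 1 - x)
      (by nlinarith [h.1] : (0:ℝ) < 1 - t * (1 + x))
    constructor <;> unfold psi <;> nlinarith

def Hmap (t : ℕ → ℝ) (ht0 : ∀ n, 0 < t n) (ht : ∀ n, t n < 1/2) : Hcube → Hcube :=
  fun f => ⟨fun n => psi (t n) (f.1 n), fun n => psi_mem (ht0 n) (ht n) (f.2 n)⟩

lemma Hmap_bijective (t : ℕ → ℝ) (ht0 : ∀ n, 0 < t n) (ht : ∀ n, t n < 1/2) :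
    Function.Bijective (Hmap t ht0 ht) := by
  constructor
  · intro f g hfg
    ext n
    have h : psi (t n) (f.1 n) = psi (t n) (g.1 n) := congrFun (congrArg Subtype.val hfg) n
    by_contra hne
    rcases lt_or_gt_of_ne hne with h1 | h1
    · exact absurd h (ne_of_lt (psi_lt_psi (ht0 n) (ht n) (f.2 n) (g.2 n) h1))
    · exact absurd h.symm (ne_of_lt (psi_lt_psi (ht0 n) (ht n) (g.2 n) (f.2 n) h1))
  · intro g
    have hsurj : ∀ n, ∃ x ∈ Icc (-1:ℝ) 1, psi (t n) x = g.1 n := by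
      intro n
      have hcont : ContinuousOn (psi (t n)) (Icc (-1:ℝ) 1) := by
        unfold psi; fun_prop
      have hIVT := intermediate_value_Icc (by norm_num : (-1:ℝ) ≤ 1) hcont
      have h1 : psi (t n) (-1) = -1 := by unfold psi; ring
      have h2 : psi (t n) 1 = 1 := by unfold psi; ring
      rw [h1, h2] at hIVT
      obtain ⟨x, hx, hxe⟩ := hIVT (g.2 n)
      exact ⟨x, hx, hxe⟩
    choose x hx hxe using hsurj
    exact ⟨⟨x, hx⟩, Subtype.ext (funext fun n => hxe n)⟩

lemma Hmap_continuous (t : ℕ → ℝ) (ht0 : ∀ n, 0 < t n) (ht : ∀ n, t n < 1/2) :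
    Continuous (Hmap t ht0 ht) := by
  apply Continuous.subtype_mk
  apply continuous_pi
  intro n
  have : Continuous fun f : Hcube => f.1 n := (continuous_apply n).comp continuous_subtype_val
  exact this.add (continuous_const.mul (continuous_const.sub (this.pow 2)))

def Hhomeo (t : ℕ → ℝ) (ht0 : ∀ n, 0 < t n) (ht : ∀ n, t n < 1/2) : Hcube ≃ₜ Hcube :=
  (Hmap_continuous t ht0 ht).homeoOfEquivCompactToT2
    (f := Equiv.ofBijective _ (Hmap_bijective t ht0 ht))

lemma Hhomeo_apply (t : ℕ → ℝ) (ht0 : ∀ n, 0 < t n) (ht : ∀ n, t n < 1/2) (f : Hcube) (n : ℕ) :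
    ((Hhomeo t ht0 ht) f).1 n = psi (t n) (f.1 n) := rfl

end HcubeAux

/-- For a free filter `F` on `ℕ` and countable sets `D, E ⊆ (-1,1)^ℕ`, there is a
homeomorphism `h` of the Hilbert cube such that `h[C_F] = C_F`,
`h[(-1,1)^ℕ] = (-1,1)^ℕ` and `h(d)(n) ≠ e(n)` for all `d ∈ D`, `e ∈ E` and `n`. -/
theorem exists_homeomorph_missing_countable (F : Filter ℕ) (hproper : F.NeBot)
    (hfree : F ≤ Filter.cofinite) (D E : Set Hcube)
    (hDsub : D ⊆ pseudoInt) (hEsub : E ⊆ pseudoInt)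
    (hDc : D.Countable) (hEc : E.Countable) :
    ∃ h : Hcube ≃ₜ Hcube, h '' CF F = CF F ∧ h '' pseudoInt = pseudoInt ∧
      ∀ d ∈ D, ∀ e ∈ E, ∀ n : ℕ, (h d).val n ≠ e.val n := by
  classical
  -- the bad set of parameters at coordinate n
  set B : ℕ → Set ℝ := fun n =>
    (fun p : Hcube × Hcube => (p.2.1 n - p.1.1 n) / (1 - (p.1.1 n) ^ 2)) '' (D ×ˢ E) with hB
  have hBc : ∀ n, (B n).Countable := fun n => (hDc.prod hEc).image _
  -- select parameters
  have hsel : ∀ n : ℕ, ∃ s : ℝ, s ∈ Ioo (0:ℝ) ((1/2) ^ (n+1)) ∧ s ∉ B n := by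
    intro n
    by_contra hc
    push_neg at hc
    have hsub : Ioo (0:ℝ) ((1/2) ^ (n+1)) ⊆ B n := fun s hs => hc s hs
    have h0 : MeasureTheory.volume (B n) = 0 := (hBc n).measure_zero _
    have h1 := MeasureTheory.measure_mono (μ := MeasureTheory.volume) hsub
    rw [h0, Real.volume_Ioo] at h1
    simp only [le_zero_iff, ENNReal.ofReal_eq_zero] at h1
    have : (0:ℝ) < (1/2) ^ (n+1) := by positivity
    linarith
  choose t htmem htB using hsel
  have ht0 : ∀ n, 0 < t n := fun n => (htmem n).1
  have htlt : ∀ n, t n < (1/2) ^ (n+1) := fun n => (htmem n).2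
  have ht : ∀ n, t n < 1/2 := by
    intro n
    have : ((1:ℝ)/2) ^ (n+1) ≤ (1/2) ^ 1 :=
      pow_le_pow_of_le_one (by norm_num) (by norm_num) (by omega)
    calc t n < (1/2) ^ (n+1) := htlt n
      _ ≤ 1/2 := by simpa using this
  -- the sets {n | t n < δ} are in F
  have hcof : ∀ δ : ℝ, 0 < δ → {n | t n < δ} ∈ F := by
    intro δ hδ
    apply hfree
    rw [Nat.cofinite_eq_atTop]
    have h2 : Tendsto (fun n : ℕ => ((1:ℝ)/2) ^ (n+1)) atTop (nhds 0) :=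
      (tendsto_pow_atTop_nhds_zero_of_lt_one (by norm_num) (by norm_num)).comp
        (tendsto_add_atTop_nat 1)
    filter_upwards [h2.eventually (gt_mem_nhds hδ)] with n hn
    exact lt_trans (htlt n) hn
  -- KF transfer
  have hKF : ∀ f g : Hcube, (∀ n, |g.1 n| ≤ |f.1 n| + t n) → f ∈ KF F → g ∈ KF F := by
    intro f g hb hf m
    have h1 : {n | |f.1 n| < (1/2) ^ (m+1)} ∈ F := hf (m+1)
    have h2 : {n | t n < (1/2) ^ (m+1)} ∈ F := hcof _ (by positivity)
    filter_upwards [h1, h2] with n hn1 hn2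
    have he : ((1:ℝ)/2) ^ (m+1) + (1/2) ^ (m+1) = (1/2) ^ m := by ring
    calc |g.1 n| ≤ |f.1 n| + t n := hb n
      _ < (1/2) ^ (m+1) + (1/2) ^ (m+1) := add_lt_add hn1 hn2
      _ = (1/2) ^ m := he
  set h : Hcube ≃ₜ Hcube := Hhomeo t ht0 ht with hh
  have happly : ∀ f : Hcube, ∀ n, (h f).1 n = psi (t n) (f.1 n) := fun f n => rfl
  -- membership iffs
  have hKFiff : ∀ f : Hcube, h f ∈ KF F ↔ f ∈ KF F := by
    intro f
    constructor
    · intro hf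
      exact hKF (h f) f (fun n => by
        rw [happly]; exact abs_le_abs_psi (ht0 n) (f.2 n)) hf
    · intro hf
      exact hKF f (h f) (fun n => by
        rw [happly]; exact abs_psi_le (ht0 n) (f.2 n)) hf
  have hPiff : ∀ f : Hcube, h f ∈ pseudoInt ↔ f ∈ pseudoInt := by
    intro f
    constructor
    · intro hf n
      exact (abs_psi_lt_one_iff (ht0 n) (ht n) (f.2 n)).mp (by rw [← happly]; exact hf n)
    · intro hf n
      rw [happly]
      exact (abs_psi_lt_one_iff (ht0 n) (ht n) (f.2 n)).mpr (hf n)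
  have hCFiff : ∀ f : Hcube, h f ∈ CF F ↔ f ∈ CF F := by
    intro f
    unfold CF
    rw [Set.mem_inter_iff, Set.mem_inter_iff, hKFiff, hPiff]
  have himg : ∀ (S : Set Hcube), (∀ f : Hcube, h f ∈ S ↔ f ∈ S) → h '' S = S := by
    intro S hS
    apply subset_antisymm
    · rintro y ⟨x, hx, rfl⟩
      exact (hS x).mpr hx
    · intro y hy
      exact ⟨h.symm y, (hS (h.symm y)).mp (by rwa [h.apply_symm_apply]),
        h.apply_symm_apply y⟩
  refine ⟨h, himg _ hCFiff, himg _ hPiff, ?_⟩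
  intro d hd e he n hEq
  have hd1 : |d.1 n| < 1 := hDsub hd n
  have hdne : 1 - (d.1 n) ^ 2 ≠ 0 := by
    have := (sq_lt_one_iff_abs_lt_one (a := d.1 n)).mpr hd1
    intro hzero; nlinarith
  have hpsi : d.1 n + t n * (1 - (d.1 n) ^ 2) = e.1 n := by
    have := happly d n
    rw [hEq] at this
    unfold psi at this
    linarith
  have hteq : t n = (e.1 n - d.1 n) / (1 - (d.1 n) ^ 2) := by
    field_simp
    linarith
  exact htB n (⟨(d, e), ⟨hd, he⟩, hteq.symm⟩)
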